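/- Let m and k be integers with k ≥ 1 and m > k+1. Then S_{m,k}(0) = m · ((m+k-2)(m+k-4)⋯(m-k+2)) / ((m+k-1)(m+k-3)⋯(m-k+1)), where the numerator product is ∏_{j=1}^{k-1} (m+k-2j) and the denominator product is ∏_{j=1}^{k} (m+k+1-2j). -/

import Mathlib

open Polynomial Finset

/-- The odd double factorial `(2k-1)!! = 1·3·5⋯(2k-1)`. -/
noncomputable def oddDoubleFac (k : ℕ) : ℝ := ∏ j ∈ Finset.range k, (2 * (j : ℝ) + 1)

/-- The even double factorial `(2k)!! = 2·4⋯(2k)`. -/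
noncomputable def evenDoubleFac (k : ℕ) : ℝ := ∏ j ∈ Finset.range k, (2 * (j : ℝ) + 2)

/-- `S_{n,k}(x) = 1 + Σ_{m=1}^{k-1} ((2m-1)!!/(2m)!!) (k-m)_{2m} (1-x²)^{-m} ∏_{j=1}^m (n²-j²)⁻¹`. -/
noncomputable def S (n k : ℕ) (x : ℝ) : ℝ :=
  1 + ∑ m ∈ Finset.Icc 1 (k - 1),
    (oddDoubleFac m / evenDoubleFac m) *
      ((ascPochhammer ℝ (2 * m)).eval ((k : ℝ) - (m : ℝ))) *
      ((1 - x ^ 2) ^ m)⁻¹ *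
      ∏ j ∈ Finset.Icc 1 m, ((n : ℝ) ^ 2 - (j : ℝ) ^ 2)⁻¹

noncomputable def ph (r : ℕ) (x : ℝ) : ℝ := (ascPochhammer ℝ (2*r)).eval x
noncomputable def pp (s q : ℕ) (m : ℝ) : ℝ := ∏ i ∈ Finset.range s, (m^2 - ((q:ℝ)+1+(i:ℝ))^2)
noncomputable def GG (n : ℕ) (m : ℝ) : ℝ := ∏ j ∈ Finset.range n, (m + (n:ℝ) - 1 - 2*(j:ℝ))

lemma odf_succ (r : ℕ) : oddDoubleFac (r+1) = oddDoubleFac r * (2*(r:ℝ)+1) := by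
  simp [oddDoubleFac, Finset.prod_range_succ]

lemma evf_succ (r : ℕ) : evenDoubleFac (r+1) = evenDoubleFac r * (2*(r:ℝ)+2) := by
  simp [evenDoubleFac, Finset.prod_range_succ]

lemma evf_pos (r : ℕ) : 0 < evenDoubleFac r := by
  apply Finset.prod_pos; intro i _; positivity

lemma ph_zero (x : ℝ) : ph 0 x = 1 := by simp [ph]

lemma ph_succ (r : ℕ) (x : ℝ) : ph (r+1) x = x * (x+1) * ph r (x+2) := by
  have h : 2*(r+1) = (2*r+1)+1 := by ring
  rw [ph, h, ascPochhammer_succ_left, ascPochhammer_succ_left]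
  simp only [ph, Polynomial.eval_comp, Polynomial.eval_mul, Polynomial.eval_add,
    Polynomial.eval_X, Polynomial.eval_one]
  ring_nf

lemma ph_shift (r : ℕ) (x : ℝ) : x * ph r (x+1) = ph r x * (x + 2*(r:ℝ)) := by
  have h1 : (ascPochhammer ℝ (2*r+1)).eval x = x * (ascPochhammer ℝ (2*r)).eval (x+1) := by
    rw [ascPochhammer_succ_left]; simp [Polynomial.eval_comp]
  have h2 : (ascPochhammer ℝ (2*r+1)).eval x = (ascPochhammer ℝ (2*r)).eval x * (x + 2*r) := by
    rw [ascPochhammer_succ_right]; simp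
  rw [ph, ph, ← h1, h2]

lemma pp_zero (q : ℕ) (m : ℝ) : pp 0 q m = 1 := by simp [pp]

lemma pp_succ (s q : ℕ) (m : ℝ) : pp (s+1) q m = pp s q m * (m^2 - ((q:ℝ)+1+(s:ℝ))^2) := by
  simp [pp, Finset.prod_range_succ]

lemma pp_add (a b q : ℕ) (m : ℝ) : pp (a+b) q m = pp a q m * pp b (q+a) m := by
  rw [pp, Finset.prod_range_add, pp, pp]
  congr 1
  apply Finset.prod_congr rfl
  intro i _
  push_cast
  ring_nf

lemma pp_one (q : ℕ) (m : ℝ) : pp 1 q m = m^2 - ((q:ℝ)+1)^2 := by simp [pp]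

lemma pp_succ' (s q : ℕ) (m : ℝ) : pp (s+1) q m = (m^2 - ((q:ℝ)+1)^2) * pp s (q+1) m := by
  rw [show s+1 = 1+s from Nat.add_comm s 1, pp_add, pp_one]

lemma pp_pos (s q : ℕ) (m : ℝ) (h : (q:ℝ)+(s:ℝ) < m) : 0 < pp s q m := by
  apply Finset.prod_pos
  intro i hi
  have hi' : (i:ℝ)+1 ≤ (s:ℝ) := by exact_mod_cast Finset.mem_range.mp hi
  have h1 : (0:ℝ) < (q:ℝ)+1+(i:ℝ) := by positivity
  have h2 : (q:ℝ)+1+(i:ℝ) < m := by linarith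
  have h3 := mul_pos (by linarith : (0:ℝ) < m - ((q:ℝ)+1+(i:ℝ))) (by linarith : (0:ℝ) < m + ((q:ℝ)+1+(i:ℝ)))
  nlinarith

lemma ppQ (s q : ℕ) (m : ℝ) :
    pp s q (m+1) * ((m - (q:ℝ) - (s:ℝ)) * (m - (q:ℝ) - (s:ℝ) - 1) * (m + (q:ℝ) + 1))
      = pp (s+1) q m * (m - (q:ℝ)) := by
  induction s with
  | zero => rw [pp_zero, pp_succ, pp_zero]; push_cast; ring
  | succ s ih =>
    rw [pp_succ, pp_succ (s+1)]
    rw [pp_succ] at ih ⊢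
    push_cast at ih ⊢
    linear_combination ((m+(q:ℝ)+(s:ℝ)+2)*(m-(q:ℝ)-(s:ℝ)-2)) * ih

lemma GG_succ (n : ℕ) (m : ℝ) : GG (n+1) m = GG n (m+1) * (m - (n:ℝ)) := by
  rw [GG, Finset.prod_range_succ, GG]
  push_cast
  rw [show m + ((n:ℝ)+1) - 1 - 2*(n:ℝ) = m - n by ring]
  congr 1
  apply Finset.prod_congr rfl
  intro i _
  ring

lemma GG_two (n : ℕ) (m : ℝ) : GG (n+2) m = GG n m * ((m+(n:ℝ)+1)*(m-(n:ℝ)-1)) := by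
  rw [GG, Finset.prod_range_succ, Finset.prod_range_succ', GG]
  push_cast
  rw [show m + ((n:ℝ)+2) - 1 - 2*0 = m + n + 1 by ring,
      show m + ((n:ℝ)+2) - 1 - 2*((n:ℝ)+1) = m - n - 1 by ring]
  rw [show (∏ i ∈ Finset.range n, (m + ((n:ℝ)+2) - 1 - 2*((i:ℝ)+1)))
      = ∏ i ∈ Finset.range n, (m + (n:ℝ) - 1 - 2*(i:ℝ)) from
    Finset.prod_congr rfl (fun i _ => by ring)]
  ring

lemma GQ (n : ℕ) (m : ℝ) : GG n m * GG (n+1) m = m * pp n 0 m := by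
  induction n with
  | zero =>
    simp [GG, pp, Finset.prod_range_succ]
  | succ n ih =>
    rw [GG_two, pp_succ]
    push_cast
    linear_combination ((m+(n:ℝ)+1)*(m-(n:ℝ)-1)) * ih

noncomputable def cc (n r : ℕ) : ℝ := oddDoubleFac r / evenDoubleFac r * ph r ((n:ℝ)+1-(r:ℝ))
noncomputable def tt (n r : ℕ) (m : ℝ) : ℝ := cc n r * pp (n-r) r m
noncomputable def FF (n : ℕ) (m : ℝ) : ℝ := ∑ r ∈ Finset.range (n+1), tt n r m
noncomputable def Wc (n : ℕ) (m : ℝ) (j : ℕ) : ℝ :=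
  -((2*(j:ℝ)+1)*((n:ℝ)+1-(j:ℝ)))/((m-(n:ℝ)-1)*(m+(j:ℝ)+1)) * tt (n+1) j m

lemma cc_zero (n : ℕ) : cc n 0 = 1 := by
  simp [cc, ph, oddDoubleFac, evenDoubleFac]

lemma ccA (n p : ℕ) : cc (n+1) (p+1) =
    oddDoubleFac p / evenDoubleFac p * ((2*(p:ℝ)+1)/(2*(p:ℝ)+2)) *
      (((n:ℝ)+1-(p:ℝ)) * ((n:ℝ)+2+(p:ℝ))) * ph p ((n:ℝ)+2-(p:ℝ)) := by
  rw [cc, odf_succ, evf_succ]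
  have he : ((n:ℝ)+1)+1-((p:ℝ)+1) = ((n:ℝ)+1-(p:ℝ)) := by ring
  push_cast
  rw [he, ph_succ]
  have h2 := ph_shift p ((n:ℝ)+2-(p:ℝ))
  have hx : ((n:ℝ)+1-(p:ℝ))+1 = (n:ℝ)+2-(p:ℝ) := by ring
  have hx2 : ((n:ℝ)+1-(p:ℝ))+2 = ((n:ℝ)+2-(p:ℝ))+1 := by ring
  rw [hx, hx2]
  have hne : evenDoubleFac p ≠ 0 := ne_of_gt (evf_pos p)
  field_simp
  linear_combination (oddDoubleFac p * ((n:ℝ)+1-(p:ℝ))) * h2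

lemma ccB (n p : ℕ) : cc n (p+1) =
    oddDoubleFac p / evenDoubleFac p * ((2*(p:ℝ)+1)/(2*(p:ℝ)+2)) *
      (((n:ℝ)-(p:ℝ)) * ((n:ℝ)+1-(p:ℝ))) * ph p ((n:ℝ)+2-(p:ℝ)) := by
  rw [cc, odf_succ, evf_succ]
  push_cast
  have he : (n:ℝ)+1-((p:ℝ)+1) = ((n:ℝ)-(p:ℝ)) := by ring
  rw [he, ph_succ]
  have hx : ((n:ℝ)-(p:ℝ))+1 = (n:ℝ)+1-(p:ℝ) := by ring
  have hx2 : ((n:ℝ)-(p:ℝ))+2 = (n:ℝ)+2-(p:ℝ) := by ring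
  rw [hx, hx2]
  have hne : evenDoubleFac p ≠ 0 := ne_of_gt (evf_pos p)
  field_simp

lemma ccC (n p : ℕ) : cc (n+1) p = oddDoubleFac p / evenDoubleFac p * ph p ((n:ℝ)+2-(p:ℝ)) := by
  rw [cc]
  push_cast
  ring_nf

lemma ph_congr (r : ℕ) {x y : ℝ} (h : x = y) : ph r x = ph r y := by rw [h]

lemma L0 (n : ℕ) (m : ℝ) (hm : (n:ℝ)+2 < m) :
    tt (n+1) 0 m - (m-(n:ℝ))^2 * tt n 0 (m+1) = Wc n m 0 := by
  have h1 : m - (n:ℝ) ≠ 0 := by linarith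
  have h2 : m - (n:ℝ) - 1 ≠ 0 := by linarith
  have h3 : m + 1 ≠ 0 := by have : (0:ℝ) ≤ n := Nat.cast_nonneg n; linarith
  have hQ := ppQ n 0 m
  push_cast at hQ
  have hX : pp n 0 (m+1) = pp (n+1) 0 m * (m - 0) / ((m - 0 - (n:ℝ)) * (m - 0 - (n:ℝ) - 1) * (m + 0 + 1)) := by
    have h0 : (0:ℝ) ≤ n := Nat.cast_nonneg n
    rw [eq_div_iff (ne_of_gt (mul_pos (mul_pos (by linarith) (by linarith)) (by linarith)))]
    convert hQ using 2 <;> ring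
  simp only [tt, cc_zero, Nat.sub_zero, one_mul, Wc, cc_zero]
  rw [hX]
  push_cast
  simp only [sub_zero, add_zero, mul_zero, zero_add]
  field_simp
  ring

lemma Ltop (n : ℕ) (m : ℝ) (hm : (n:ℝ)+2 < m) :
    tt (n+1) (n+1) m = - Wc n m n := by
  have h2 : m - (n:ℝ) - 1 ≠ 0 := by linarith
  have h4 : m + (n:ℝ) + 1 ≠ 0 := by have : (0:ℝ) ≤ n := Nat.cast_nonneg n; linarith
  have hne : evenDoubleFac n ≠ 0 := ne_of_gt (evf_pos n)
  rw [tt, Wc, tt, ccA n n, ccC n n]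
  have hs : n + 1 - (n+1) = 0 := by omega
  have hs2 : n + 1 - n = 1 := by omega
  rw [hs, hs2, pp_zero, pp_one]
  push_cast
  field_simp
  ring


set_option maxHeartbeats 1000000 in
lemma Lmid (p s : ℕ) (m : ℝ) (hm : (p:ℝ)+(s:ℝ)+2 < m) :
    tt (p+1+s+1) (p+1) m - (m-((p:ℝ)+(s:ℝ)+1))^2 * tt (p+1+s) (p+1) (m+1)
      = Wc (p+1+s) m (p+1) - Wc (p+1+s) m p := by
  have h0p : (0:ℝ) ≤ p := Nat.cast_nonneg p
  have h0s : (0:ℝ) ≤ s := Nat.cast_nonneg s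
  have hne : evenDoubleFac p ≠ 0 := ne_of_gt (evf_pos p)
  have d1 : m - ((p:ℝ)+(s:ℝ)+1) ≠ 0 := by linarith
  have d2 : m - ((p:ℝ)+(s:ℝ)+1) - 1 ≠ 0 := by linarith
  have d3 : m + (p:ℝ) + 2 ≠ 0 := by linarith
  have d4 : m + (p:ℝ) + 1 ≠ 0 := by linarith
  have d6 : (2:ℝ)*(p:ℝ)+2 ≠ 0 := by linarith
  have e1 : p+1+s+1 = (p+s+1)+1 := by omega
  have e2 : p+1+s = p+s+1 := by omega
  have e3 : (p+1+s+1) - (p+1) = s+1 := by omega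
  have e4 : (p+1+s) - (p+1) = s := by omega
  have e6 : (p+s+1+1) - p = s+2 := by omega
  set C : ℝ := oddDoubleFac p / evenDoubleFac p * ph p ((s:ℝ)+3) * pp (s+1) (p+1) m with hC
  have T1 : tt (p+1+s+1) (p+1) m
      = C * ((2*(p:ℝ)+1)/(2*(p:ℝ)+2) * (((s:ℝ)+2)*(2*(p:ℝ)+(s:ℝ)+3))) := by
    rw [tt, e3, e1, ccA (p+s+1) p,
        ph_congr p (show ((p+s+1:ℕ):ℝ)+2-(p:ℝ) = (s:ℝ)+3 by push_cast; ring), hC]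
    push_cast
    field_simp
    ring
  have T2 : tt (p+1+s) (p+1) (m+1) *
        ((m-((p:ℝ)+(s:ℝ)+1))*(m-((p:ℝ)+(s:ℝ)+1)-1)*(m+(p:ℝ)+2))
      = C * ((2*(p:ℝ)+1)/(2*(p:ℝ)+2) * (((s:ℝ)+1)*((s:ℝ)+2)) * (m-(p:ℝ)-1)) := by
    rw [tt, e4, e2, ccB (p+s+1) p,
        ph_congr p (show ((p+s+1:ℕ):ℝ)+2-(p:ℝ) = (s:ℝ)+3 by push_cast; ring), hC]
    have hQ := ppQ s (p+1) m
    push_cast at hQ ⊢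
    linear_combination (oddDoubleFac p / evenDoubleFac p * ((2*(p:ℝ)+1)/(2*(p:ℝ)+2)) *
      (((s:ℝ)+1)*((s:ℝ)+2)) * ph p ((s:ℝ)+3)) * hQ
  have T3 : Wc (p+1+s) m (p+1)
      = C * (-(((2*(p:ℝ)+3)*((s:ℝ)+1))/((m-((p:ℝ)+(s:ℝ)+1)-1)*(m+(p:ℝ)+2))) *
          ((2*(p:ℝ)+1)/(2*(p:ℝ)+2) * (((s:ℝ)+2)*(2*(p:ℝ)+(s:ℝ)+3)))) := by
    rw [Wc, e2, show (p+s+1)+1 = p+1+s+1 from by omega, T1]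
    push_cast
    ring
  have T4 : Wc (p+1+s) m p
      = C * (-(((2*(p:ℝ)+1)*((s:ℝ)+2))/((m-((p:ℝ)+(s:ℝ)+1)-1)*(m+(p:ℝ)+1))) *
          (m^2-((p:ℝ)+1)^2)) := by
    rw [Wc, e2, tt, e6, ccC (p+s+1) p,
        ph_congr p (show ((p+s+1:ℕ):ℝ)+2-(p:ℝ) = (s:ℝ)+3 by push_cast; ring),
        show s+2 = (s+1)+1 from rfl, pp_succ' (s+1) p, hC]
    push_cast
    ring
  have key : ((2*(p:ℝ)+1)/(2*(p:ℝ)+2) * (((s:ℝ)+2)*(2*(p:ℝ)+(s:ℝ)+3)))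
      - (m-((p:ℝ)+(s:ℝ)+1))^2 * ((2*(p:ℝ)+1)/(2*(p:ℝ)+2) * (((s:ℝ)+1)*((s:ℝ)+2)) * (m-(p:ℝ)-1) /
          ((m-((p:ℝ)+(s:ℝ)+1))*(m-((p:ℝ)+(s:ℝ)+1)-1)*(m+(p:ℝ)+2)))
      = (-(((2*(p:ℝ)+3)*((s:ℝ)+1))/((m-((p:ℝ)+(s:ℝ)+1)-1)*(m+(p:ℝ)+2))) *
          ((2*(p:ℝ)+1)/(2*(p:ℝ)+2) * (((s:ℝ)+2)*(2*(p:ℝ)+(s:ℝ)+3))))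
        - (-(((2*(p:ℝ)+1)*((s:ℝ)+2))/((m-((p:ℝ)+(s:ℝ)+1)-1)*(m+(p:ℝ)+1))) *
          (m^2-((p:ℝ)+1)^2)) := by
    field_simp
    ring
  have hD : (m-((p:ℝ)+(s:ℝ)+1))*(m-((p:ℝ)+(s:ℝ)+1)-1)*(m+(p:ℝ)+2) ≠ 0 :=
    mul_ne_zero (mul_ne_zero d1 d2) d3
  have T2' := eq_div_of_mul_eq hD T2
  linear_combination T1 - (m-((p:ℝ)+(s:ℝ)+1))^2 * T2' - T3 + T4 + C * key

lemma tt_top_zero (n : ℕ) (x : ℝ) : tt n (n+1) x = 0 := by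
  rw [tt, cc]
  rw [show ((n:ℝ)+1-((n+1:ℕ):ℝ)) = 0 by push_cast; ring]
  rw [show ph (n+1) 0 = 0 by rw [ph_succ]; ring]
  ring

lemma Wc_top (n : ℕ) (m : ℝ) : Wc n m (n+1) = 0 := by
  rw [Wc]
  rw [show ((n:ℝ)+1-((n+1:ℕ):ℝ)) = 0 by push_cast; ring]
  ring

lemma FFstep (n : ℕ) (m : ℝ) (hm : (n:ℝ)+2 < m) :
    FF (n+1) m = (m-(n:ℝ))^2 * FF n (m+1) := by
  have hpad : FF n (m+1) = ∑ q ∈ Finset.range (n+2), tt n q (m+1) := by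
    rw [FF, Finset.sum_range_succ (fun q => tt n q (m+1)) (n+1), tt_top_zero, add_zero]
  rw [← sub_eq_zero, hpad, FF, Finset.mul_sum, ← Finset.sum_sub_distrib]
  set V : ℕ → ℝ := fun q => match q with
    | 0 => (0:ℝ)
    | j+1 => Wc n m j with hV
  have hstep : ∀ q ∈ Finset.range (n+2),
      tt (n+1) q m - (m-(n:ℝ))^2 * tt n q (m+1) = V (q+1) - V q := by
    intro q hq
    have hq' : q ≤ n+1 := by have := Finset.mem_range.mp hq; omega
    match q with
    | 0 =>
      simp only [hV]
      rw [sub_zero]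
      exact L0 n m hm
    | j+1 =>
      simp only [hV]
      rcases Nat.lt_or_ge j n with hj | hj
      · obtain ⟨s, rfl⟩ : ∃ s, n = j+1+s := ⟨n-j-1, by omega⟩
        have hc : (j:ℝ)+(s:ℝ)+2 < m := by push_cast at hm; linarith
        have := Lmid j s m hc
        push_cast at this ⊢
        linear_combination this
      · have hjn : j = n := by omega
        subst hjn
        rw [tt_top_zero, Wc_top]
        have := Ltop j m hm
        linear_combination this
  rw [Finset.sum_congr rfl hstep, Finset.sum_range_sub]
  simp only [hV]
  rw [Wc_top]
  norm_num

lemma FG (n : ℕ) : ∀ m : ℝ, (n:ℝ)+1 < m → FF n m = (GG n m)^2 := by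
  induction n with
  | zero =>
    intro m hm
    simp [FF, tt, cc_zero, GG, pp_zero]
  | succ n ih =>
    intro m hm
    push_cast at hm
    rw [FFstep n m (by linarith), ih (m+1) (by linarith), GG_succ]
    ring

lemma GG_pos (n : ℕ) (x : ℝ) (h : (n:ℝ)-1 < x) : 0 < GG n x := by
  apply Finset.prod_pos
  intro j hj
  have : (j:ℝ)+1 ≤ (n:ℝ) := by exact_mod_cast Finset.mem_range.mp hj
  linarith

lemma Icc_pp (r : ℕ) (x : ℝ) : ∏ j ∈ Finset.Icc 1 r, (x^2 - (j:ℝ)^2) = pp r 0 x := by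
  rw [← Finset.Ico_add_one_right_eq_Icc, Finset.prod_Ico_eq_prod_range, pp]
  apply Finset.prod_congr rfl
  intro i _
  push_cast
  ring

lemma Icc_GG (n : ℕ) (x : ℝ) : ∏ j ∈ Finset.Icc 1 n, (x + (n:ℝ) + 1 - 2*(j:ℝ)) = GG n x := by
  rw [← Finset.Ico_add_one_right_eq_Icc, Finset.prod_Ico_eq_prod_range, GG]
  apply Finset.prod_congr rfl
  intro i _
  push_cast
  ring

theorem stmt7 (m k : ℕ) (hk : 1 ≤ k) (hm : k + 1 < m) :
    S m k 0 = (m : ℝ) *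
      (∏ j ∈ Finset.Icc 1 (k - 1), ((m : ℝ) + (k : ℝ) - 2 * (j : ℝ))) /
      (∏ j ∈ Finset.Icc 1 k, ((m : ℝ) + (k : ℝ) + 1 - 2 * (j : ℝ))) := by
  obtain ⟨n, rfl⟩ : ∃ n, k = n+1 := ⟨k-1, by omega⟩
  have hmr : (n:ℝ)+2 < (m:ℝ) := by exact_mod_cast (by omega : n+2 < m)
  have hmr1 : (n:ℝ)+1 < (m:ℝ) := by linarith
  -- LHS
  have hsum : S m (n+1) 0 = ∑ r ∈ Finset.range (n+1), cc n r * (pp r 0 (m:ℝ))⁻¹ := by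
    rw [S, Nat.add_sub_cancel, Finset.sum_range_succ']
    rw [show cc n 0 * (pp 0 0 (m:ℝ))⁻¹ = 1 by rw [cc_zero, pp_zero]; norm_num]
    rw [add_comm (∑ i ∈ Finset.range n, cc n (i+1) * (pp (i+1) 0 (m:ℝ))⁻¹) 1]
    congr 1
    rw [← Finset.Ico_add_one_right_eq_Icc, Finset.sum_Ico_eq_sum_range]
    apply Finset.sum_congr rfl
    intro i _
    rw [← Icc_pp, ← Finset.prod_inv_distrib, cc]
    rw [show ((n:ℝ)+1-((i+1:ℕ):ℝ)) = ((n+1:ℕ):ℝ) - ((1+i:ℕ):ℝ) by push_cast; ring]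
    rw [show (1:ℕ)+i = i+1 from by omega]
    rw [ph]
    norm_num
    try ring
  have hterm : ∀ r ∈ Finset.range (n+1),
      cc n r * (pp r 0 (m:ℝ))⁻¹ = tt n r (m:ℝ) / pp n 0 (m:ℝ) := by
    intro r hr
    have hr' : r ≤ n := by have := Finset.mem_range.mp hr; omega
    have hrr : (r:ℝ) ≤ (n:ℝ) := by exact_mod_cast hr'
    have hsplit : pp n 0 (m:ℝ) = pp r 0 (m:ℝ) * pp (n-r) r (m:ℝ) := by
      conv_lhs => rw [show n = r + (n-r) by omega]
      rw [pp_add]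
      norm_num
    have h1 : 0 < pp r 0 (m:ℝ) := pp_pos r 0 (m:ℝ) (by push_cast; linarith)
    have h2 : 0 < pp (n-r) r (m:ℝ) := by
      apply pp_pos
      have : ((n-r:ℕ):ℝ) = (n:ℝ)-(r:ℝ) := by
        rw [Nat.cast_sub hr']
      rw [this]; linarith
    rw [tt, hsplit]
    field_simp
  have hLHS : S m (n+1) 0 = FF n (m:ℝ) / pp n 0 (m:ℝ) := by
    rw [hsum, Finset.sum_congr rfl hterm, FF, Finset.sum_div]
  -- RHS
  have hP : (∏ j ∈ Finset.Icc 1 (n+1-1), ((m:ℝ) + ((n+1:ℕ):ℝ) - 2*(j:ℝ))) = GG n (m:ℝ) := by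
    rw [Nat.add_sub_cancel, ← Icc_GG n (m:ℝ)]
    apply Finset.prod_congr rfl
    intro j _
    push_cast
    try ring
  have hQ : (∏ j ∈ Finset.Icc 1 (n+1), ((m:ℝ) + ((n+1:ℕ):ℝ) + 1 - 2*(j:ℝ))) = GG (n+1) (m:ℝ) := by
    rw [← Icc_GG (n+1) (m:ℝ)]
  rw [hLHS, hP, hQ, FG n (m:ℝ) hmr1]
  have hGpos : 0 < GG (n+1) (m:ℝ) := GG_pos (n+1) (m:ℝ) (by push_cast; linarith)
  have hppos : 0 < pp n 0 (m:ℝ) := pp_pos n 0 (m:ℝ) (by push_cast; linarith)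
  rw [div_eq_div_iff (ne_of_gt hppos) (ne_of_gt hGpos)]
  linear_combination (GG n (m:ℝ)) * GQ n (m:ℝ)
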